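/- Let S be a convex C₀-semigroup on a Banach space X and let x ∈ D_L, i.e., sup_{0<h≤h₀} ‖(S(h)x − x)/h‖ < ∞ for some h₀ > 0. Then S(t)x ∈ D_L for every t ≥ 0. -/

import Mathlib

/-- A convex operator bounded on a ball is Lipschitz on a slightly smaller ball. -/
lemma convex_op_lip {X : Type*} [NormedAddCommGroup X] [Lattice X] [HasSolidNorm X]
    [IsOrderedAddMonoid X] [NormedSpace ℝ X] [PosSMulStrictMono ℝ X] (F : X → X)
    (hc : ∀ x y : X, ∀ l : ℝ, 0 ≤ l → l ≤ 1 →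
      F (l • x + (1 - l) • y) ≤ l • F x + (1 - l) • F y)
    (r C : ℝ) (hC : ∀ x : X, ‖x‖ ≤ r + 1 → ‖F x‖ ≤ C)
    (y z : X) (hy : ‖y‖ ≤ r) (hz : ‖z‖ ≤ r) :
    ‖F y - F z‖ ≤ 4 * C * ‖y - z‖ := by
  rcases eq_or_ne y z with rfl | hne
  · simp
  have hδ : (0 : ℝ) < ‖y - z‖ := norm_pos_iff.mpr (sub_ne_zero.mpr hne)
  set δ := ‖y - z‖ with hδdef
  set l : ℝ := δ / (1 + δ) with hl
  have h1δ : (0:ℝ) < 1 + δ := by linarith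
  have hl0 : 0 ≤ l := div_nonneg hδ.le h1δ.le
  have hl1 : l ≤ 1 := by rw [hl, div_le_one h1δ]; linarith
  have hlδ : l ≤ δ := by
    rw [hl, div_le_iff₀ h1δ]; nlinarith
  -- one-sided estimate
  have key : ∀ a b : X, ‖a - b‖ = δ → F a - F b ≤ l • (F (a + δ⁻¹ • (a - b)) - F b) := by
    intro a b hab
    set w := a + δ⁻¹ • (a - b) with hw
    have hrepr : a = l • w + (1 - l) • b := by
      rw [hw, hl]
      match_scalars <;> (field_simp; try ring)
    have h1 : F a ≤ l • F w + (1 - l) • F b := by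
      conv_lhs => rw [hrepr]
      exact hc w b l hl0 hl1
    have h2 : l • F w + (1 - l) • F b - F b = l • (F w - F b) := by module
    calc F a - F b ≤ l • F w + (1 - l) • F b - F b := sub_le_sub_right h1 _
      _ = l • (F w - F b) := h2
  set w₁ := y + δ⁻¹ • (y - z) with hw₁
  set w₂ := z + δ⁻¹ • (z - y) with hw₂
  have hnorm1 : ∀ a b : X, ‖a‖ ≤ r → ‖a - b‖ = δ → ‖a + δ⁻¹ • (a - b)‖ ≤ r + 1 := by
    intro a b ha hab
    calc ‖a + δ⁻¹ • (a - b)‖ ≤ ‖a‖ + ‖δ⁻¹ • (a - b)‖ := norm_add_le _ _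
      _ = ‖a‖ + |δ⁻¹| * ‖a - b‖ := by rw [norm_smul, Real.norm_eq_abs]
      _ = ‖a‖ + 1 := by
          rw [hab, abs_of_nonneg (inv_nonneg.mpr hδ.le), inv_mul_cancel₀ hδ.ne']
      _ ≤ r + 1 := by linarith
  have hzy : ‖z - y‖ = δ := norm_sub_rev z y
  have e1 : F y - F z ≤ l • (F w₁ - F z) := key y z rfl
  have e2 : F z - F y ≤ l • (F w₂ - F y) := key z y hzy
  set u : X := |F w₁ - F z| + |F w₂ - F y| with hu
  have hu0 : 0 ≤ u := add_nonneg (abs_nonneg _) (abs_nonneg _)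
  have hu1 : l • (F w₁ - F z) ≤ l • u :=
    smul_le_smul_of_nonneg_left
      ((le_abs_self _).trans (le_add_of_nonneg_right (abs_nonneg _))) hl0
  have hu2 : l • (F w₂ - F y) ≤ l • u :=
    smul_le_smul_of_nonneg_left
      ((le_abs_self _).trans (le_add_of_nonneg_left (abs_nonneg _))) hl0
  have habs : |F y - F z| ≤ l • u :=
    abs_le'.mpr ⟨e1.trans hu1, by rw [neg_sub]; exact e2.trans hu2⟩
  have hsolid : ‖F y - F z‖ ≤ ‖l • u‖ := by
    refine HasSolidNorm.solid ?_
    rwa [abs_of_nonneg (smul_nonneg hl0 hu0)]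
  have hC0 : 0 ≤ C := (norm_nonneg _).trans (hC y (by linarith))
  have hb1 : ‖F w₁ - F z‖ ≤ 2 * C := by
    have := hC w₁ (hnorm1 y z hy rfl)
    have := hC z (by linarith)
    calc ‖F w₁ - F z‖ ≤ ‖F w₁‖ + ‖F z‖ := norm_sub_le _ _
      _ ≤ 2 * C := by linarith
  have hb2 : ‖F w₂ - F y‖ ≤ 2 * C := by
    have := hC w₂ (hnorm1 z y hz hzy)
    have := hC y (by linarith)
    calc ‖F w₂ - F y‖ ≤ ‖F w₂‖ + ‖F y‖ := norm_sub_le _ _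
      _ ≤ 2 * C := by linarith
  have hun : ‖u‖ ≤ 4 * C := by
    calc ‖u‖ ≤ ‖|F w₁ - F z|‖ + ‖|F w₂ - F y|‖ := norm_add_le _ _
      _ = ‖F w₁ - F z‖ + ‖F w₂ - F y‖ := by rw [norm_abs_eq_norm, norm_abs_eq_norm]
      _ ≤ 4 * C := by linarith
  calc ‖F y - F z‖ ≤ ‖l • u‖ := hsolid
    _ = l * ‖u‖ := by rw [norm_smul, Real.norm_eq_abs, abs_of_nonneg hl0]
    _ ≤ δ * (4 * C) := by
        have := norm_nonneg u
        nlinarith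
    _ = 4 * C * δ := by ring

theorem stmt16 {X : Type*} [NormedAddCommGroup X] [Lattice X] [HasSolidNorm X]
    [IsOrderedAddMonoid X] [NormedSpace ℝ X] [PosSMulStrictMono ℝ X]
    [CompleteSpace X] (S : ℝ → X → X)
    (h0 : ∀ x, S 0 x = x)
    (hsg : ∀ s t : ℝ, 0 ≤ s → 0 ≤ t → ∀ x, S (s + t) x = S t (S s x))
    (hconv : ∀ t : ℝ, 0 ≤ t → ∀ x y : X, ∀ l : ℝ, 0 ≤ l → l ≤ 1 →
      S t (l • x + (1 - l) • y) ≤ l • S t x + (1 - l) • S t y)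
    (hbdd : ∀ t : ℝ, 0 ≤ t → ∀ r : ℝ, 0 < r → ∃ C : ℝ, ∀ x : X, ‖x‖ ≤ r → ‖S t x‖ ≤ C)
    (hcont : ∀ x : X, Filter.Tendsto (fun t => S t x) (nhdsWithin 0 (Set.Ioi 0)) (nhds x))
    (x : X)
    (hx : ∃ h₀ > (0 : ℝ), ∃ C : ℝ, ∀ h : ℝ, 0 < h → h ≤ h₀ → ‖S h x - x‖ ≤ C * h)
    (t : ℝ) (ht : 0 ≤ t) :
    ∃ h₀ > (0 : ℝ), ∃ C : ℝ, ∀ h : ℝ, 0 < h → h ≤ h₀ → ‖S h (S t x) - S t x‖ ≤ C * h := by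
  obtain ⟨h₀, hh₀, C, hCx⟩ := hx
  -- C is nonnegative
  have hC0 : 0 ≤ C := by
    have := hCx h₀ hh₀ le_rfl
    nlinarith [norm_nonneg (S h₀ x - x)]
  set r : ℝ := ‖x‖ + 1 with hr
  obtain ⟨C₂, hC₂⟩ := hbdd t ht (r + 1) (by positivity)
  set h₁ : ℝ := min h₀ (1 / (C + 1)) with hh₁def
  have hh₁ : 0 < h₁ := lt_min hh₀ (by positivity)
  refine ⟨h₁, hh₁, 4 * C₂ * C, ?_⟩
  intro h hhpos hhle
  have hhh₀ : h ≤ h₀ := hhle.trans (min_le_left _ _)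
  have hsmall : ‖S h x - x‖ ≤ 1 := by
    have h1 : ‖S h x - x‖ ≤ C * h := hCx h hhpos hhh₀
    have h2 : h ≤ 1 / (C + 1) := hhle.trans (min_le_right _ _)
    have : C * h ≤ C * (1 / (C + 1)) := by
      exact mul_le_mul_of_nonneg_left h2 hC0
    have h3 : C * (1 / (C + 1)) ≤ 1 := by
      rw [mul_one_div, div_le_one (by linarith)]; linarith
    linarith
  have hShx : ‖S h x‖ ≤ r := by
    calc ‖S h x‖ = ‖(S h x - x) + x‖ := by rw [sub_add_cancel]
      _ ≤ ‖S h x - x‖ + ‖x‖ := norm_add_le _ _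
      _ ≤ r := by rw [hr]; linarith
  have hxr : ‖x‖ ≤ r := by rw [hr]; linarith
  -- semigroup commutation: S h (S t x) = S t (S h x)
  have hcomm : S h (S t x) = S t (S h x) := by
    rw [← hsg t h ht hhpos.le, ← hsg h t hhpos.le ht, add_comm]
  rw [hcomm]
  calc ‖S t (S h x) - S t x‖ ≤ 4 * C₂ * ‖S h x - x‖ :=
        convex_op_lip (S t) (hconv t ht) r C₂ hC₂ (S h x) x hShx hxr
    _ ≤ 4 * C₂ * (C * h) := by
        have hC₂0 : 0 ≤ C₂ := (norm_nonneg _).trans (hC₂ x (by linarith))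
        exact mul_le_mul_of_nonneg_left (hCx h hhpos hhh₀) (by linarith)
    _ = 4 * C₂ * C * h := by ring
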